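/- Let R be a noncommutative Poisson ring containing elements x_1, …, x_n, p_1, …, p_n (n ≥ 1) satisfying the canonical relations {x_i, p_j} = δ_{ij}·1, {x_i, x_j} = 0, {p_i, p_j} = 0 for all i, j. Then: (a) all the commutators [x_i, p_i] coincide, i.e. [x_i, p_i] = [x_j, p_j] for all i, j; (b) the common element Z := [x_1, p_1] satisfies [A,B] = Z·{A,B} for all A, B ∈ R; (c) Z is central with respect to both products ({Z,A} = 0 and Z·A = A·Z for all A ∈ R); (d) any two elements of R with vanishing bracket commute; in particular x_i·x_j = x_j·x_i, p_i·p_j = p_j·p_i, and x_i·p_j = p_j·x_i for i ≠ j. -/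

import Mathlib

/-- A noncommutative Poisson ring structure on a unital associative ring `R`:
a bracket that is additive in each argument, alternating, satisfies the
Jacobi identity and the Leibniz rule with respect to the ring product. -/
structure NCPoissonStructure (R : Type*) [Ring R] where
  bracket : R → R → R
  add_left : ∀ a b c : R, bracket (a + b) c = bracket a c + bracket b c
  add_right : ∀ a b c : R, bracket a (b + c) = bracket a b + bracket a c
  alternating : ∀ a : R, bracket a a = 0
  jacobi : ∀ a b c : R,
    bracket a (bracket b c) + bracket b (bracket c a) + bracket c (bracket a b) = 0
  leibniz : ∀ a b c : R, bracket a (b * c) = bracket a b * c + b * bracket a c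

namespace NCPoissonStructure

variable {R : Type*} [Ring R] (P : NCPoissonStructure R)

/-- Antisymmetry, from the alternating property and biadditivity. -/
lemma antisymm (a b : R) : P.bracket b a = - P.bracket a b := by
  have h := P.alternating (a + b)
  rw [P.add_left, P.add_right, P.add_right, P.alternating, P.alternating,
    zero_add, add_zero] at h
  exact eq_neg_of_add_eq_zero_right h

lemma zero_right (a : R) : P.bracket a 0 = 0 := by
  have h := P.add_right a 0 0
  simpa using h.symm

lemma neg_right (a b : R) : P.bracket a (-b) = - P.bracket a b := by
  have h := P.add_right a b (-b)
  rw [add_neg_cancel, P.zero_right] at h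
  exact eq_neg_of_add_eq_zero_right h.symm

lemma neg_left (a b : R) : P.bracket (-a) b = - P.bracket a b := by
  rw [P.antisymm, P.neg_right, P.antisymm a b, neg_neg]

lemma sub_left (a b c : R) : P.bracket (a - b) c = P.bracket a c - P.bracket b c := by
  rw [sub_eq_add_neg, P.add_left, P.neg_left, ← sub_eq_add_neg]

lemma one_right (a : R) : P.bracket a 1 = 0 := by
  have h := P.leibniz a 1 1
  simp only [one_mul, mul_one] at h
  exact (left_eq_add.mp h)

/-- Leibniz rule in the first argument. -/
lemma leibniz_left (a b c : R) :
    P.bracket (a * b) c = P.bracket a c * b + a * P.bracket b c := by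
  rw [P.antisymm, P.leibniz, P.antisymm c a, P.antisymm c b]
  noncomm_ring

/-- The Farkas–Letzter identity: `{a,c}·[b,d] = [a,c]·{b,d}`, obtained by
expanding `{ab, cd}` by the Leibniz rule in two different orders. -/
lemma key (a b c d : R) :
    P.bracket a c * (b * d - d * b) = (a * c - c * a) * P.bracket b d := by
  have h1 : P.bracket (a * b) (c * d)
      = P.bracket a c * d * b + c * (P.bracket a d * b) + a * (P.bracket b c * d)
        + a * (c * P.bracket b d) := by
    rw [P.leibniz_left, P.leibniz, P.leibniz]
    noncomm_ring
  have h2 : P.bracket (a * b) (c * d)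
      = P.bracket a c * b * d + a * P.bracket b c * d
        + c * (P.bracket a d * b + a * P.bracket b d) := by
    rw [P.leibniz, P.leibniz_left, P.leibniz_left]
    noncomm_ring
  have h := h2.symm.trans h1
  linear_combination (norm := noncomm_ring) h

end NCPoissonStructure

/-- For canonical variables `x i`, `p i` (`1 ≤ n`) with `{x i, p j} = δ_{ij}`,
`{x i, x j} = 0 = {p i, p j}`: (a) all the commutators `[x i, p i]` coincide;
(b) the common element `Z := [x 0, p 0]` satisfies `[A,B] = Z·{A,B}` for all `A, B`;
(c) `Z` is central for both products; (d) elements with vanishing bracket commute. -/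
theorem canonical_variables_Z
    {R : Type*} [Ring R] (P : NCPoissonStructure R) {n : ℕ} (hn : 1 ≤ n)
    (x p : Fin n → R)
    (hxp : ∀ i j, P.bracket (x i) (p j) = if i = j then 1 else 0)
    (hxx : ∀ i j, P.bracket (x i) (x j) = 0)
    (hpp : ∀ i j, P.bracket (p i) (p j) = 0) :
    (∀ i j, x i * p i - p i * x i = x j * p j - p j * x j) ∧
    (∀ A B : R, A * B - B * A
        = (x ⟨0, hn⟩ * p ⟨0, hn⟩ - p ⟨0, hn⟩ * x ⟨0, hn⟩) * P.bracket A B) ∧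
    (∀ A : R,
        P.bracket (x ⟨0, hn⟩ * p ⟨0, hn⟩ - p ⟨0, hn⟩ * x ⟨0, hn⟩) A = 0 ∧
        (x ⟨0, hn⟩ * p ⟨0, hn⟩ - p ⟨0, hn⟩ * x ⟨0, hn⟩) * A
          = A * (x ⟨0, hn⟩ * p ⟨0, hn⟩ - p ⟨0, hn⟩ * x ⟨0, hn⟩)) ∧
    (∀ A B : R, P.bracket A B = 0 → A * B = B * A) := by
  set X := x ⟨0, hn⟩ with hX
  set Q := p ⟨0, hn⟩ with hQ
  have hXQ : P.bracket X Q = 1 := by rw [hX, hQ, hxp, if_pos rfl]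
  set Z := X * Q - Q * X with hZ
  -- (b) : the bracket determines the commutator
  have hb : ∀ A B : R, A * B - B * A = Z * P.bracket A B := by
    intro A B
    have h := P.key X A Q B
    rwa [hXQ, one_mul] at h
  -- (a)
  have ha : ∀ i j : Fin n, x i * p i - p i * x i = x j * p j - p j * x j := by
    have hcomm : ∀ i : Fin n, x i * p i - p i * x i = Z := by
      intro i
      rw [hb (x i) (p i), hxp, if_pos rfl, mul_one]
    intro i j; rw [hcomm i, hcomm j]
  -- (c), bracket part: `{Z, A} = 0`
  have hcz : ∀ A : R, P.bracket Z A = 0 := by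
    intro A
    have hjac := P.jacobi X A Q
    have hAQ : P.bracket A (P.bracket Q X) = 0 := by
      rw [P.antisymm X Q, hXQ, P.neg_right, P.one_right, neg_zero]
    rw [hAQ, add_zero] at hjac
    -- `{X, {A,Q}} = -{X, {Q,A}}`
    have hswap : P.bracket X (P.bracket A Q) = - P.bracket X (P.bracket Q A) := by
      rw [P.antisymm Q A, P.neg_right]
    have hQXA : P.bracket Q (P.bracket X A) = P.bracket X (P.bracket Q A) := by
      rw [hswap] at hjac
      rwa [neg_add_eq_zero, eq_comm] at hjac
    calc P.bracket Z A
        = P.bracket (X * Q) A - P.bracket (Q * X) A := by rw [hZ, P.sub_left]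
      _ = (P.bracket X A * Q - Q * P.bracket X A)
            + (X * P.bracket Q A - P.bracket Q A * X) := by
          rw [P.leibniz_left, P.leibniz_left]; noncomm_ring
      _ = Z * P.bracket (P.bracket X A) Q + Z * P.bracket X (P.bracket Q A) := by
          rw [← hb (P.bracket X A) Q, ← hb X (P.bracket Q A)]
      _ = 0 := by
          rw [P.antisymm Q (P.bracket X A), hQXA]
          noncomm_ring
  -- assemble everything
  refine ⟨ha, hb, fun A => ⟨hcz A, ?_⟩, fun A B h => ?_⟩
  · have h := hb Z A
    rw [hcz A, mul_zero, sub_eq_zero] at h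
    exact h
  · have h2 := hb A B
    rw [h, mul_zero, sub_eq_zero] at h2
    exact h2
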